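/- If G is a connected {3K₁, K₁+C₄}-free graph, then V(G) can be partitioned into at most 4 sets M₁, M₂, M₃, M₄, each inducing a complete subgraph, with |M₁| ≤ ω, |M₂| ≤ ω, |M₃| ≤ ω−1, and |M₄| ≤ ω−1, where ω is the clique number of G. -/

import Mathlib

open SimpleGraph

/-- `G` has no independent set of size 3: among any 3 distinct vertices, some two are adjacent. -/
def ThreeK1Free {V : Type*} (G : SimpleGraph V) : Prop :=
  ∀ a b c : V, a ≠ b → a ≠ c → b ≠ c → G.Adj a b ∨ G.Adj a c ∨ G.Adj b c

/-- The wheel `K₁ + C₄`: hub `0` joined to the 4-cycle `1-2-3-4-1`. -/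
def wheel4 : SimpleGraph (Fin 5) :=
  SimpleGraph.fromRel (fun i j =>
    i = 0 ∨ (i = 1 ∧ j = 2) ∨ (i = 2 ∧ j = 3) ∨ (i = 3 ∧ j = 4) ∨ (i = 4 ∧ j = 1))

/-- `G` has no induced subgraph isomorphic to `K₁ + C₄` (graph embeddings are induced). -/
def K1C4Free {V : Type*} (G : SimpleGraph V) : Prop :=
  IsEmpty (wheel4 ↪g G)


noncomputable def wheel_embed {V : Type*} (G : SimpleGraph V) (v x a y b : V)
    (hvx : G.Adj v x) (hva : G.Adj v a) (hvy : G.Adj v y) (hvb : G.Adj v b)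
    (hxa : G.Adj x a) (hya : G.Adj y a) (hyb : G.Adj y b) (hxb : G.Adj x b)
    (hxy : ¬ G.Adj x y) (hab : ¬ G.Adj a b) (hxyne : x ≠ y) (habne : a ≠ b) :
    wheel4 ↪g G := by
  have h1 : v ≠ x := G.ne_of_adj hvx
  have h2 : v ≠ a := G.ne_of_adj hva
  have h3 : v ≠ y := G.ne_of_adj hvy
  have h4 : v ≠ b := G.ne_of_adj hvb
  have h5 : x ≠ a := G.ne_of_adj hxa
  have h6 : x ≠ b := G.ne_of_adj hxb
  have h7 : y ≠ a := G.ne_of_adj hya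
  have h8 : y ≠ b := G.ne_of_adj hyb
  have hinj : Function.Injective ![v, x, a, y, b] := by
    intro i j hij
    fin_cases i <;> fin_cases j <;> simp at hij ⊢ <;> tauto
  refine ⟨⟨![v, x, a, y, b], hinj⟩, ?_⟩
  have hxa' := hxa.symm
  have hya' := hya.symm
  have hyb' := hyb.symm
  have hxb' := hxb.symm
  have hvx' := hvx.symm
  have hva' := hva.symm
  have hvy' := hvy.symm
  have hvb' := hvb.symm
  have hyx : ¬ G.Adj y x := fun h => hxy h.symm
  have hba : ¬ G.Adj b a := fun h => hab h.symm
  have iv : ¬ G.Adj v v := G.irrefl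
  have ix : ¬ G.Adj x x := G.irrefl
  have ia : ¬ G.Adj a a := G.irrefl
  have iy : ¬ G.Adj y y := G.irrefl
  have ib : ¬ G.Adj b b := G.irrefl
  intro i j
  fin_cases i <;> fin_cases j <;>
    simp [wheel4, SimpleGraph.fromRel_adj] <;> tauto

lemma clique_ncard_le {V : Type*} [Fintype V] (G : SimpleGraph V) (s : Set V)
    (hs : s.Pairwise G.Adj) : s.ncard ≤ G.cliqueNum := by
  classical
  have h1 : G.IsClique (s.toFinset : Set V) := by
    rw [Set.coe_toFinset]; exact hs
  have := @SimpleGraph.IsClique.card_le_cliqueNum _ G _ s.toFinset h1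
  rwa [Set.ncard_eq_toFinset_card' s]

theorem stmt2 {V : Type*} [Fintype V] (G : SimpleGraph V)
    (h3 : ThreeK1Free G) (h4 : K1C4Free G) (hconn : G.Connected) :
    ∃ M₁ M₂ M₃ M₄ : Set V,
      M₁ ∪ M₂ ∪ M₃ ∪ M₄ = Set.univ ∧
      Disjoint M₁ M₂ ∧ Disjoint M₁ M₃ ∧ Disjoint M₁ M₄ ∧
      Disjoint M₂ M₃ ∧ Disjoint M₂ M₄ ∧ Disjoint M₃ M₄ ∧
      M₁.Pairwise G.Adj ∧ M₂.Pairwise G.Adj ∧ M₃.Pairwise G.Adj ∧ M₄.Pairwise G.Adj ∧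
      M₁.ncard ≤ G.cliqueNum ∧ M₂.ncard ≤ G.cliqueNum ∧
      M₃.ncard ≤ G.cliqueNum - 1 ∧ M₄.ncard ≤ G.cliqueNum - 1 := by
  classical
  rcases isEmpty_or_nonempty V with hV | ⟨⟨v⟩⟩
  · refine ⟨∅, ∅, ∅, ∅, ?_, by simp, by simp, by simp, by simp, by simp, by simp,
      by simp, by simp, by simp, by simp, by simp, by simp, by simp, by simp⟩
    ext u; exact (hV.false u).elim
  set N : Set V := {u | G.Adj v u} with hNdef
  set Nn : Set V := {u | u ≠ v ∧ ¬ G.Adj v u} with hNndef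
  have hNnclique : Nn.Pairwise G.Adj := by
    intro a ha b hb hab
    rcases h3 v a b (Ne.symm ha.1) (Ne.symm hb.1) hab with h | h | h
    · exact absurd h ha.2
    · exact absurd h hb.2
    · exact h
  have hvN : v ∉ N := fun h => G.irrefl h
  have hsub : ∀ s : Set V, s ⊆ N → s.Pairwise G.Adj → s.ncard ≤ G.cliqueNum - 1 := by
    intro s hsN hsc
    have hvs : v ∉ s := fun h => hvN (hsN h)
    have hclique : (insert v s).Pairwise G.Adj := by
      refine (haveI : Std.Symm G.Adj := G.symm; Set.pairwise_insert_of_symm (r := G.Adj)) |>.mpr ⟨hsc, ?_⟩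
      intro b hb _; exact hsN hb
    have h1 := clique_ncard_le G _ hclique
    rw [Set.ncard_insert_of_notMem hvs (Set.toFinite s)] at h1
    omega
  by_cases hNc : N.Pairwise G.Adj
  · -- N is a clique
    have hM2 : (insert v N).Pairwise G.Adj :=
      (haveI : Std.Symm G.Adj := G.symm; Set.pairwise_insert_of_symm (r := G.Adj)) |>.mpr
        ⟨hNc, fun b hb _ => hb⟩
    refine ⟨Nn, insert v N, ∅, ∅, ?_, ?_, by simp, by simp, by simp, by simp, by simp,
      hNnclique, hM2, by simp, by simp, clique_ncard_le G _ hNnclique,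
      clique_ncard_le G _ hM2, by simp, by simp⟩
    · ext u
      simp only [Set.mem_union, Set.mem_univ, iff_true, Set.mem_insert_iff,
        Set.union_empty]
      by_cases h1 : u = v
      · exact Or.inr (Or.inl h1)
      by_cases h2 : G.Adj v u
      · exact Or.inr (Or.inr h2)
      · exact Or.inl ⟨h1, h2⟩
    · rw [Set.disjoint_left]
      rintro a ⟨ha1, ha2⟩ (rfl | h)
      · exact ha1 rfl
      · exact ha2 h
  · -- there exist nonadjacent x y in N
    rw [Set.Pairwise] at hNc
    push_neg at hNc
    obtain ⟨x, hx, y, hy, hxy, hxyn⟩ := hNc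
    set P : Set V := {u | u ∈ N ∧ u ≠ x ∧ ¬ G.Adj x u} with hPdef
    set Q : Set V := {u | u ∈ N ∧ u ∉ P ∧ u ≠ y ∧ ¬ G.Adj y u} with hQdef
    set R : Set V := {u | u ∈ N ∧ u ∉ P ∧ u ∉ Q} with hRdef
    have hPc : P.Pairwise G.Adj := by
      intro a ha b hb hab
      rcases h3 x a b (Ne.symm ha.2.1) (Ne.symm hb.2.1) hab with h | h | h
      · exact absurd h ha.2.2
      · exact absurd h hb.2.2
      · exact h
    have hQc : Q.Pairwise G.Adj := by
      intro a ha b hb hab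
      rcases h3 y a b (Ne.symm ha.2.2.1) (Ne.symm hb.2.2.1) hab with h | h | h
      · exact absurd h ha.2.2.2
      · exact absurd h hb.2.2.2
      · exact h
    have hRc : R.Pairwise G.Adj := by
      intro a ha b hb hab
      by_contra habn
      obtain ⟨haN, haP, haQ⟩ := ha
      obtain ⟨hbN, hbP, hbQ⟩ := hb
      have hax' : a = x ∨ G.Adj x a := by
        by_contra h; push_neg at h; exact haP ⟨haN, h.1, h.2⟩
      have hbx' : b = x ∨ G.Adj x b := by
        by_contra h; push_neg at h; exact hbP ⟨hbN, h.1, h.2⟩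
      have hax : G.Adj x a := by
        rcases hax' with rfl | h
        · rcases hbx' with rfl | h
          · exact absurd rfl hab
          · exact absurd h habn
        · exact h
      have hbx : G.Adj x b := by
        rcases hbx' with rfl | h
        · exact absurd hax.symm habn
        · exact h
      have hay' : a = y ∨ G.Adj y a := by
        by_contra h; push_neg at h; exact haQ ⟨haN, haP, h.1, h.2⟩
      have hby' : b = y ∨ G.Adj y b := by
        by_contra h; push_neg at h; exact hbQ ⟨hbN, hbP, h.1, h.2⟩
      have hay : G.Adj y a := by
        rcases hay' with rfl | h
        · rcases hby' with rfl | h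
          · exact absurd rfl hab
          · exact absurd h habn
        · exact h
      have hby : G.Adj y b := by
        rcases hby' with rfl | h
        · exact absurd hay.symm habn
        · exact h
      -- build the wheel
      exact h4.false (wheel_embed G v x a y b hx haN hy hbN hax hay hby hbx hxyn habn hxy hab)
    have hM2 : (insert v P).Pairwise G.Adj := by
      refine (haveI : Std.Symm G.Adj := G.symm; Set.pairwise_insert_of_symm (r := G.Adj)) |>.mpr ⟨hPc, ?_⟩
      intro b hb _; exact hb.1
    refine ⟨Nn, insert v P, Q, R, ?_, ?_, ?_, ?_, ?_, ?_, ?_,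
      hNnclique, hM2, hQc, hRc, clique_ncard_le G _ hNnclique, clique_ncard_le G _ hM2,
      hsub Q (fun u hu => hu.1) hQc, hsub R (fun u hu => hu.1) hRc⟩
    · ext u
      simp only [Set.mem_union, Set.mem_univ, iff_true, Set.mem_insert_iff]
      by_cases h1 : u = v
      · exact Or.inl (Or.inl (Or.inr (Or.inl h1)))
      by_cases h2 : G.Adj v u
      · by_cases h3' : u ∈ P
        · exact Or.inl (Or.inl (Or.inr (Or.inr h3')))
        by_cases h4' : u ∈ Q
        · exact Or.inl (Or.inr h4')
        · exact Or.inr ⟨h2, h3', h4'⟩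
      · exact Or.inl (Or.inl (Or.inl ⟨h1, h2⟩))
    · rw [Set.disjoint_left]
      rintro a ⟨ha1, ha2⟩ (rfl | h)
      · exact ha1 rfl
      · exact ha2 h.1
    · rw [Set.disjoint_left]
      rintro a ⟨ha1, ha2⟩ h
      exact ha2 h.1
    · rw [Set.disjoint_left]
      rintro a ⟨ha1, ha2⟩ h
      exact ha2 h.1
    · rw [Set.disjoint_left]
      rintro a (rfl | h) hQ'
      · exact hvN hQ'.1
      · exact hQ'.2.1 h
    · rw [Set.disjoint_left]
      rintro a (rfl | h) hR'
      · exact hvN hR'.1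
      · exact hR'.2.1 h
    · rw [Set.disjoint_left]
      intro a hQ' hR'
      exact hR'.2.2 hQ'
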